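/- For each m ≥ 1 and any norm ‖·‖_m on ℂ^{2m}, there exist constants D_m > 0 and d_m > 0 such that for every c = (c_{−m},...,c_{−1},c_1,...,c_m) ∈ ℂ^{2m} with ‖c‖_m = 1 and every δ > 0, the Lebesgue measure of {x ∈ 𝕋 : |∑_{0<|l|≤m} c_l e(lx)| < δ} is less than D_m δ^{d_m}, where e(x) = exp(2πix). -/

import Mathlib

open MeasureTheory Real Polynomial

/- ### Auxiliary lemmas -/

lemma aux_coeff_prod_bound (S : Multiset ℂ) (n : ℕ) :
    ‖((S.map fun z => X - C z).prod).coeff n‖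
      ≤ (S.map fun z => 1 + ‖z‖).prod := by
  induction S using Multiset.induction generalizing n with
  | empty => simp [Polynomial.coeff_one]; split <;> simp
  | cons z S ih =>
    have hB : (0:ℝ) ≤ (S.map fun z => 1 + ‖z‖).prod := by
      apply Multiset.prod_nonneg
      intro a ha
      obtain ⟨w, _, rfl⟩ := Multiset.mem_map.mp ha
      positivity
    simp only [Multiset.map_cons, Multiset.prod_cons]
    have hsplit : (X - C z) * (S.map fun z => X - C z).prod
        = X * (S.map fun z => X - C z).prod - C z * (S.map fun z => X - C z).prod := by
      ring
    rw [hsplit, Polynomial.coeff_sub]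
    have h1 : ‖(X * (S.map fun z => X - C z).prod).coeff n‖
        ≤ (S.map fun z => 1 + ‖z‖).prod := by
      cases n with
      | zero => simp [Polynomial.mul_coeff_zero]; exact hB
      | succ k => rw [Polynomial.coeff_X_mul]; exact ih k
    have h2 : ‖(C z * (S.map fun z => X - C z).prod).coeff n‖
        ≤ ‖z‖ * (S.map fun z => 1 + ‖z‖).prod := by
      rw [Polynomial.coeff_C_mul, norm_mul]
      exact mul_le_mul_of_nonneg_left (ih n) (norm_nonneg z)
    calc ‖_‖ ≤ _ + _ := norm_sub_le _ _
      _ ≤ (S.map fun z => 1 + ‖z‖).prod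
          + ‖z‖ * (S.map fun z => 1 + ‖z‖).prod := add_le_add h1 h2
      _ = (1 + ‖z‖) * (S.map fun z => 1 + ‖z‖).prod := by ring

lemma aux_prod_map_le (S : Multiset ℂ) (f g : ℂ → ℝ) (hf : ∀ z ∈ S, 0 ≤ f z)
    (h : ∀ z ∈ S, f z ≤ g z) : (S.map f).prod ≤ (S.map g).prod := by
  induction S using Multiset.induction with
  | empty => simp
  | cons z S ih =>
    simp only [Multiset.map_cons, Multiset.prod_cons]
    have hPf : (0:ℝ) ≤ (S.map f).prod := by
      apply Multiset.prod_nonneg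
      intro a ha; obtain ⟨w, hw, rfl⟩ := Multiset.mem_map.mp ha
      exact hf w (Multiset.mem_cons_of_mem hw)
    have hfz := hf z (Multiset.mem_cons_self z S)
    exact mul_le_mul (h z (Multiset.mem_cons_self z S))
      (ih (fun w hw => hf w (Multiset.mem_cons_of_mem hw))
          (fun w hw => h w (Multiset.mem_cons_of_mem hw))) hPf
      (hfz.trans (h z (Multiset.mem_cons_self z S)))

lemma aux_pow_card_le_prod (S : Multiset ℂ) (f : ℂ → ℝ) (t : ℝ) (ht : 0 ≤ t)
    (h : ∀ z ∈ S, t ≤ f z) : t ^ (Multiset.card S) ≤ (S.map f).prod := by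
  induction S using Multiset.induction with
  | empty => simp
  | cons z S ih =>
    simp only [Multiset.map_cons, Multiset.prod_cons, Multiset.card_cons, pow_succ]
    rw [mul_comm]
    exact mul_le_mul (h z (Multiset.mem_cons_self z S))
      (ih (fun w hw => h w (Multiset.mem_cons_of_mem hw))) (pow_nonneg ht _)
      (ht.trans (h z (Multiset.mem_cons_self z S)))

lemma aux_prod_const_mul (S : Multiset ℂ) (f : ℂ → ℝ) (c : ℝ) :
    (S.map fun z => c * f z).prod = c ^ (Multiset.card S) * (S.map f).prod := by
  induction S using Multiset.induction with
  | empty => simp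
  | cons z S ih => simp [Multiset.prod_cons, ih, pow_succ]; ring

lemma aux_map_nonneg (S : Multiset ℂ) (f : ℂ → ℝ) (hf : ∀ z, 0 ≤ f z) :
    0 ≤ (S.map f).prod := by
  apply Multiset.prod_nonneg
  intro a ha; obtain ⟨w, _, rfl⟩ := Multiset.mem_map.mp ha
  exact hf w

lemma aux_abs_multiset_prod (S : Multiset ℂ) :
    ‖S.prod‖ = (S.map (‖·‖)).prod := by
  induction S using Multiset.induction with
  | empty => simp
  | cons z S ih => simp [Multiset.prod_cons, norm_mul, ih]

lemma aux_sin_lb {u : ℝ} (hu : |u| ≤ 1/2) : 2 * |u| ≤ |Real.sin (π * u)| := by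
  have h0 : |π * u| = π * |u| := by rw [abs_mul, abs_of_pos Real.pi_pos]
  have hle : |π * u| ≤ π / 2 := by rw [h0]; nlinarith [Real.pi_pos]
  have h := Real.mul_abs_le_abs_sin hle
  rw [h0] at h
  calc 2 * |u| = 2 / π * (π * |u|) := by field_simp
    _ ≤ _ := h

lemma aux_sin_lb' {u : ℝ} (h1 : 1/2 ≤ u) (h2 : u ≤ 1) : 2 * (1 - u) ≤ |Real.sin (π * u)| := by
  have h : Real.sin (π * u) = Real.sin (π * (1 - u)) := by
    rw [show π * u = π - π * (1 - u) by ring, Real.sin_pi_sub]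
  have hb : 2 / π * (π * (1 - u)) ≤ Real.sin (π * (1 - u)) := by
    apply Real.mul_le_sin
    · nlinarith [Real.pi_pos]
    · nlinarith [Real.pi_pos]
  rw [h]
  calc 2 * (1 - u) = 2 / π * (π * (1 - u)) := by field_simp
    _ ≤ Real.sin (π * (1 - u)) := hb
    _ ≤ |Real.sin (π * (1 - u))| := le_abs_self _

lemma aux_two_I_sin (z : ℂ) :
    2 * Complex.I * Complex.sin z = Complex.exp (z * Complex.I) - Complex.exp (-z * Complex.I) := by
  rw [Complex.sin]
  linear_combination (Complex.exp (-z * Complex.I) - Complex.exp (z * Complex.I)) * Complex.I_sq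

lemma aux_abs_exp_sub_exp (a b : ℝ) :
    ‖Complex.exp (a * Complex.I) - Complex.exp (b * Complex.I)‖
      = 2 * |Real.sin ((a - b) / 2)| := by
  have key : Complex.exp (a * Complex.I) - Complex.exp (b * Complex.I)
      = Complex.exp ((((a + b) / 2 : ℝ)) * Complex.I)
        * (2 * Complex.I * Complex.sin (((a - b) / 2 : ℝ))) := by
    rw [aux_two_I_sin, mul_sub, ← Complex.exp_add, ← Complex.exp_add]
    congr 2
    · push_cast; ring
    · push_cast; ring
  rw [key, norm_mul, Complex.norm_exp_ofReal_mul_I, one_mul, norm_mul, norm_mul,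
    ← Complex.ofReal_sin, Complex.norm_real, Real.norm_eq_abs, Complex.norm_I, Complex.norm_two]
  ring

lemma aux_arc_measure (z : ℂ) (t : ℝ) (ht : 0 ≤ t) :
    volume {x ∈ Set.Ico (0:ℝ) 1 |
      ‖Complex.exp (((2*π*x : ℝ)) * Complex.I) - z‖ ≤ t}
      ≤ ENNReal.ofReal (2*t) := by
  set A := {x ∈ Set.Ico (0:ℝ) 1 |
      ‖Complex.exp (((2*π*x : ℝ)) * Complex.I) - z‖ ≤ t} with hA
  rcases Set.eq_empty_or_nonempty A with h | ⟨x0, hx0⟩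
  · simp [h]
  · obtain ⟨⟨hx00, hx01⟩, hx0z⟩ := hx0
    have hsub : A ⊆ Set.Icc (x0 - t/2) (x0 + t/2) ∪
        (Set.Icc 0 (x0 - 1 + t/2) ∪ Set.Icc (x0 + 1 - t/2) 1) := by
      rintro x ⟨⟨hx0', hx1'⟩, hxz⟩
      have hdiff : ‖Complex.exp (((2*π*x : ℝ)) * Complex.I)
          - Complex.exp (((2*π*x0 : ℝ)) * Complex.I)‖ ≤ 2 * t := by
        have h1 := dist_triangle (Complex.exp (((2*π*x : ℝ)) * Complex.I)) z
          (Complex.exp (((2*π*x0 : ℝ)) * Complex.I))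
        simp only [Complex.dist_eq] at h1
        have h2 : ‖z - Complex.exp (((2*π*x0 : ℝ)) * Complex.I)‖
            = ‖Complex.exp (((2*π*x0 : ℝ)) * Complex.I) - z‖ :=
          norm_sub_rev _ _
        rw [h2] at h1
        linarith
      have hsin : |Real.sin (π * (x - x0))| ≤ t := by
        rw [aux_abs_exp_sub_exp] at hdiff
        rw [show (2*π*x - 2*π*x0)/2 = π * (x - x0) by ring] at hdiff
        linarith
      set u := x - x0 with hu
      rcases le_or_gt (|u|) (1/2) with hcase | hcase
      · left
        have hq := (aux_sin_lb hcase).trans hsin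
        have habs : |u| ≤ t/2 := by linarith
        rw [abs_le] at habs
        exact ⟨by simp only [hu] at habs ⊢; linarith [habs.1], by
          simp only [hu] at habs ⊢; linarith [habs.2]⟩
      · right
        rcases le_or_gt 0 u with hpos | hneg
        · right
          have h1 : 1/2 ≤ u := by rw [abs_of_nonneg hpos] at hcase; exact hcase.le
          have h2 : u ≤ 1 := by simp only [hu]; linarith
          have hq := (aux_sin_lb' h1 h2).trans hsin
          exact ⟨by simp only [hu] at hq ⊢; linarith, hx1'.le⟩
        · left
          have h1 : (1:ℝ)/2 ≤ -u := by rw [abs_of_neg hneg] at hcase; linarith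
          have h2 : -u ≤ 1 := by simp only [hu]; linarith
          have hkey := aux_sin_lb' h1 h2
          rw [show π * (-u) = -(π*u) by ring, Real.sin_neg, abs_neg] at hkey
          have hq := hkey.trans hsin
          exact ⟨hx0', by simp only [hu] at hq ⊢; linarith⟩
    calc volume A ≤ _ := measure_mono hsub
      _ ≤ volume (Set.Icc (x0 - t/2) (x0 + t/2)) +
          (volume (Set.Icc (0:ℝ) (x0 - 1 + t/2)) + volume (Set.Icc (x0 + 1 - t/2) 1)) := by
          refine (measure_union_le _ _).trans ?_
          exact add_le_add le_rfl (measure_union_le _ _)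
      _ ≤ ENNReal.ofReal t + (ENNReal.ofReal (t/2) + ENNReal.ofReal (t/2)) := by
          rw [Real.volume_Icc, Real.volume_Icc, Real.volume_Icc]
          exact add_le_add (ENNReal.ofReal_le_ofReal (by linarith))
            (add_le_add (ENNReal.ofReal_le_ofReal (by linarith))
              (ENNReal.ofReal_le_ofReal (by linarith)))
      _ = ENNReal.ofReal (2*t) := by
          rw [← ENNReal.ofReal_add (by linarith) (by linarith),
            ← ENNReal.ofReal_add ht (by linarith)]
          congr 1; ring

lemma aux_pointwise (m : ℕ) (Q : Polynomial ℂ) (hdeg : Q.natDegree ≤ 2*m)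
    (κ : ℝ) (hκle : ∃ n, κ ≤ ‖Q.coeff n‖) (u : ℂ) (hu : ‖u‖ = 1) :
    κ / 3^(2*m) * ((Q.roots.filter (fun z => ‖z‖ ≤ 2)).map
        (fun z => ‖u - z‖)).prod ≤ ‖Q.eval u‖ := by
  classical
  set S := Q.roots with hS
  set a := Q.leadingCoeff with haa
  have hsplits : Splits Q := IsAlgClosed.splits Q
  have hcard : Multiset.card S = Q.natDegree := (Polynomial.splits_iff_card_roots).mp hsplits
  have hfac : Q = C a * (S.map fun z => X - C z).prod :=
    hsplits.eq_prod_roots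
  set B := (S.map fun z => 1 + ‖z‖).prod with hBdef
  have hκB : κ ≤ ‖a‖ * B := by
    obtain ⟨n, hn⟩ := hκle
    have h1 : Q.coeff n = a * ((S.map fun z => X - C z).prod.coeff n) := by
      conv_lhs => rw [hfac]
      rw [Polynomial.coeff_C_mul]
    calc κ ≤ ‖Q.coeff n‖ := hn
      _ = ‖a‖ * ‖(S.map fun z => X - C z).prod.coeff n‖ := by
          rw [h1, norm_mul]
      _ ≤ ‖a‖ * B := by
          exact mul_le_mul_of_nonneg_left (aux_coeff_prod_bound S n) (norm_nonneg a)
  set Sn := S.filter (fun z => ‖z‖ ≤ 2) with hSn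
  set Sf := S.filter (fun z => ¬ ‖z‖ ≤ 2) with hSf
  have hsplit2 : Sn + Sf = S := Multiset.filter_add_not _ S
  set Pn := (Sn.map fun z => ‖u - z‖).prod with hPn
  set Pf := (Sf.map fun z => ‖u - z‖).prod with hPf
  have heval : ‖Q.eval u‖ = ‖a‖ * (Pn * Pf) := by
    conv_lhs => rw [hfac]
    rw [Polynomial.eval_mul, Polynomial.eval_C, norm_mul, Polynomial.eval_multiset_prod,
      Multiset.map_map, aux_abs_multiset_prod, Multiset.map_map]
    congr 1
    rw [show ((‖·‖) ∘ (Polynomial.eval u ∘ fun z => X - C z)) = fun z => ‖u - z‖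
      by funext z; simp]
    rw [← hsplit2, Multiset.map_add, Multiset.prod_add]
  have hBsplit : B = (Sn.map fun z => 1 + ‖z‖).prod
      * (Sf.map fun z => 1 + ‖z‖).prod := by
    rw [hBdef, ← hsplit2, Multiset.map_add, Multiset.prod_add]
  have hBn : (Sn.map fun z => 1 + ‖z‖).prod ≤ 3 ^ (Multiset.card Sn) := by
    calc _ ≤ (Sn.map fun _ => (3:ℝ)).prod := by
          apply aux_prod_map_le
          · intro z _; positivity
          · intro z hz
            have := (Multiset.mem_filter.mp
              (show z ∈ S.filter (fun z => ‖z‖ ≤ 2) from hz)).2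
            linarith
      _ = 3 ^ (Multiset.card Sn) := by
          rw [Multiset.map_const', Multiset.prod_replicate]
  have hBf : (Sf.map fun z => 1 + ‖z‖).prod ≤ 3 ^ (Multiset.card Sf) * Pf := by
    calc _ ≤ (Sf.map fun z => 3 * ‖u - z‖).prod := by
          apply aux_prod_map_le
          · intro z _; positivity
          · intro z hz
            have h2 : ¬ ‖z‖ ≤ 2 := (Multiset.mem_filter.mp
              (show z ∈ S.filter (fun z => ¬ ‖z‖ ≤ 2) from hz)).2
            push_neg at h2
            have h3 : ‖z‖ - ‖u‖ ≤ ‖u - z‖ := by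
              rw [norm_sub_rev]
              simpa using norm_sub_norm_le z u
            rw [hu] at h3
            linarith
      _ = 3 ^ (Multiset.card Sf) * Pf := aux_prod_const_mul Sf _ 3
  have hPn0 : 0 ≤ Pn := aux_map_nonneg _ _ (fun z => norm_nonneg _)
  have hPf0 : 0 ≤ Pf := aux_map_nonneg _ _ (fun z => norm_nonneg _)
  have ha0 : 0 ≤ ‖a‖ := norm_nonneg a
  have hcards : Multiset.card Sn + Multiset.card Sf ≤ 2*m := by
    have := congrArg Multiset.card hsplit2
    rw [Multiset.card_add] at this
    omega
  have hkey : κ / 3^(2*m) ≤ ‖a‖ * Pf := by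
    have h1 : κ ≤ ‖a‖ * (3 ^ (Multiset.card Sn) * (3 ^ (Multiset.card Sf) * Pf)) := by
      calc κ ≤ ‖a‖ * B := hκB
        _ = ‖a‖ * ((Sn.map fun z => 1 + ‖z‖).prod
            * (Sf.map fun z => 1 + ‖z‖).prod) := by rw [hBsplit]
        _ ≤ ‖a‖ * (3 ^ (Multiset.card Sn) * (3 ^ (Multiset.card Sf) * Pf)) := by
            apply mul_le_mul_of_nonneg_left _ ha0
            exact mul_le_mul hBn hBf (aux_map_nonneg _ _ (fun z => by positivity)) (by positivity)
    have h2 : ‖a‖ * (3 ^ (Multiset.card Sn) * (3 ^ (Multiset.card Sf) * Pf))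
        = 3 ^ (Multiset.card Sn + Multiset.card Sf) * (‖a‖ * Pf) := by
      rw [pow_add]; ring
    have h3 : (3:ℝ) ^ (Multiset.card Sn + Multiset.card Sf) ≤ 3 ^ (2*m) :=
      pow_le_pow_right₀ (by norm_num) hcards
    have h4 : κ ≤ 3 ^ (2*m) * (‖a‖ * Pf) := by
      rw [h2] at h1
      exact h1.trans (mul_le_mul_of_nonneg_right h3 (by positivity))
    rw [div_le_iff₀ (by positivity : (0:ℝ) < 3^(2*m))]
    linarith
  calc κ / 3^(2*m) * Pn ≤ (‖a‖ * Pf) * Pn :=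
        mul_le_mul_of_nonneg_right hkey hPn0
    _ = ‖a‖ * (Pn * Pf) := by ring
    _ = ‖Q.eval u‖ := heval.symm

lemma aux_norm_lb (m : ℕ) (hm : 1 ≤ m)
    (nrm : (Fin (2 * m) → ℂ) → ℝ)
    (hnrm_zero : ∀ c, nrm c = 0 ↔ c = 0)
    (hnrm_add : ∀ c₁ c₂, nrm (c₁ + c₂) ≤ nrm c₁ + nrm c₂)
    (hnrm_smul : ∀ (a : ℂ) c, nrm (a • c) = ‖a‖ * nrm c) :
    ∃ K : ℝ, 0 < K ∧ ∀ c, nrm c = 1 → ∃ i, K⁻¹ ≤ ‖c i‖ := by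
  have hzero : nrm 0 = 0 := (hnrm_zero 0).mpr rfl
  have hnonneg : ∀ c, 0 ≤ nrm c := by
    intro c
    have h1 : nrm (-c) = nrm c := by
      have := hnrm_smul (-1) c
      simpa using this
    have h2 : nrm (c + (-c)) ≤ nrm c + nrm (-c) := hnrm_add _ _
    rw [add_neg_cancel, hzero, h1] at h2
    linarith
  have hsum : ∀ (s : Finset (Fin (2*m))) (f : Fin (2*m) → (Fin (2*m) → ℂ)),
      nrm (∑ i ∈ s, f i) ≤ ∑ i ∈ s, nrm (f i) := by
    intro s f
    induction s using Finset.cons_induction with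
    | empty => simp [hzero]
    | cons j s hj ih =>
      rw [Finset.sum_cons, Finset.sum_cons]
      exact (hnrm_add _ _).trans (by linarith)
  set K := ∑ i : Fin (2*m), nrm (Pi.single i 1) with hK
  have hKi : ∀ i : Fin (2*m), 0 < nrm (Pi.single i 1) := by
    intro i
    rcases (hnonneg (Pi.single i 1)).lt_or_eq with h | h
    · exact h
    · exfalso
      have := (hnrm_zero _).mp h.symm
      have h2 := congrFun this i
      simp at h2
  have hne : (Finset.univ : Finset (Fin (2*m))).Nonempty := by
    refine ⟨⟨0, by omega⟩, Finset.mem_univ _⟩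
  have hKpos : 0 < K := Finset.sum_pos (fun i _ => hKi i) hne
  refine ⟨K, hKpos, ?_⟩
  intro c hc
  by_contra hcon
  push_neg at hcon
  have hdecomp : c = ∑ i : Fin (2*m), (c i) • (Pi.single i 1 : Fin (2*m) → ℂ) := by
    funext j
    rw [Finset.sum_apply]
    rw [Finset.sum_eq_single j]
    · simp
    · intro i _ hij; simp [Pi.single_apply, hij]
    · simp
  have hlt : nrm c < 1 := by
    calc nrm c ≤ ∑ i : Fin (2*m), nrm ((c i) • (Pi.single i 1 : Fin (2*m) → ℂ)) := by
          nth_rewrite 1 [hdecomp]; exact hsum _ _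
      _ = ∑ i : Fin (2*m), ‖c i‖ * nrm (Pi.single i 1) := by
          simp [hnrm_smul]
      _ < ∑ i : Fin (2*m), K⁻¹ * nrm (Pi.single i 1) := by
          apply Finset.sum_lt_sum_of_nonempty hne
          intro i _
          exact mul_lt_mul_of_pos_right (hcon i) (hKi i)
      _ = 1 := by rw [← Finset.mul_sum, ← hK, inv_mul_cancel₀ hKpos.ne']
  rw [hc] at hlt; exact lt_irrefl _ hlt

/-- Anti-concentration for trigonometric polynomials: for each `m ≥ 1` and any norm on
`ℂ^{2m}`, there are `D_m, d_m > 0` such that every zero-mean trigonometric polynomial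
`∑_{0<|l|≤m} c_l e(lx)` with unit-norm coefficient vector satisfies
`λ{x ∈ 𝕋 : |∑ c_l e(lx)| < δ} < D_m δ^{d_m}`. -/
theorem stmt_11 (m : ℕ) (hm : 1 ≤ m)
    (nrm : (Fin (2 * m) → ℂ) → ℝ)
    (hnrm_zero : ∀ c, nrm c = 0 ↔ c = 0)
    (hnrm_add : ∀ c₁ c₂, nrm (c₁ + c₂) ≤ nrm c₁ + nrm c₂)
    (hnrm_smul : ∀ (a : ℂ) c, nrm (a • c) = ‖a‖ * nrm c) :
    ∃ D : ℝ, 0 < D ∧ ∃ dm : ℝ, 0 < dm ∧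
      ∀ c : Fin (2 * m) → ℂ, nrm c = 1 → ∀ δ : ℝ, 0 < δ →
        volume {x ∈ Set.Ico (0 : ℝ) 1 |
          ‖∑ i : Fin (2 * m),
            c i * Complex.exp (2 * (π : ℂ) * Complex.I *
              (((if (i : ℕ) < m then ((i : ℕ) : ℝ) - m else ((i : ℕ) : ℝ) - m + 1) : ℝ) : ℂ)
              * (x : ℂ))‖ < δ}
          < ENNReal.ofReal (D * δ ^ dm) := by
  classical
  obtain ⟨K, hKpos, hKbig⟩ := aux_norm_lb m hm nrm hnrm_zero hnrm_add hnrm_smul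
  have h2m : (0:ℝ) < (2*m : ℕ) := by
    have : 0 < 2*m := by omega
    exact_mod_cast this
  set dm : ℝ := ((2*m : ℕ) : ℝ)⁻¹ with hdm
  have hdm0 : 0 < dm := by positivity
  set C0 : ℝ := ((3:ℝ)^(2*m) * K) ^ dm with hC0
  have hC0pos : 0 < C0 := Real.rpow_pos_of_pos (by positivity) _
  refine ⟨(4*(m:ℝ) + 2) * C0, by positivity, dm, hdm0, ?_⟩
  intro c hc δ hδ
  -- the polynomial
  set ee : Fin (2*m) → ℕ := fun i => if (i:ℕ) < m then (i:ℕ) else (i:ℕ)+1 with hee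
  have hinj : Function.Injective ee := by
    intro i j h
    simp only [hee] at h
    split_ifs at h <;> exact Fin.ext (by omega)
  set Q : Polynomial ℂ := ∑ i : Fin (2*m), Polynomial.C (c i) * Polynomial.X ^ (ee i) with hQdef
  have hQcoeff : ∀ i : Fin (2*m), Q.coeff (ee i) = c i := by
    intro i
    rw [hQdef, Polynomial.finset_sum_coeff]
    rw [Finset.sum_eq_single i]
    · simp [Polynomial.coeff_C_mul, Polynomial.coeff_X_pow]
    · intro j _ hji
      rw [Polynomial.coeff_C_mul, Polynomial.coeff_X_pow]
      have : ee i ≠ ee j := fun h => hji (hinj h.symm)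
      rw [if_neg this]
      ring
    · simp
  have hdeg : Q.natDegree ≤ 2*m := by
    apply Polynomial.natDegree_sum_le_of_forall_le
    intro i _
    exact (Polynomial.natDegree_C_mul_le _ _).trans (by
      rw [Polynomial.natDegree_X_pow]
      simp only [hee]; split_ifs <;> omega)
  obtain ⟨i0, hi0⟩ := hKbig c hc
  have hκle : ∃ n, K⁻¹ ≤ ‖Q.coeff n‖ := ⟨ee i0, by rw [hQcoeff i0]; exact hi0⟩
  -- |P x| = |Q.eval u|
  have hPQ : ∀ x : ℝ,
      ‖∑ i : Fin (2 * m),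
        c i * Complex.exp (2 * (π : ℂ) * Complex.I *
          (((if (i : ℕ) < m then ((i : ℕ) : ℝ) - m else ((i : ℕ) : ℝ) - m + 1) : ℝ) : ℂ)
          * (x : ℂ))‖
      = ‖Q.eval (Complex.exp (((2*π*x : ℝ)) * Complex.I))‖ := by
    intro x
    have hu : Complex.exp (((2*π*x : ℝ)) * Complex.I)
        = Complex.exp (2*(π:ℂ)*Complex.I*(x:ℂ)) := by
      congr 1; push_cast; ring
    have heval : Q.eval (Complex.exp (2*(π:ℂ)*Complex.I*(x:ℂ)))
        = ∑ i : Fin (2*m), c i * (Complex.exp (2*(π:ℂ)*Complex.I*(x:ℂ))) ^ (ee i) := by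
      rw [hQdef, Polynomial.eval_finset_sum]
      simp
    have hterm : ∀ i : Fin (2*m),
        (Complex.exp (2*(π:ℂ)*Complex.I*(x:ℂ))) ^ (ee i)
        = Complex.exp (2*(π:ℂ)*Complex.I*(m:ℂ)*(x:ℂ)) *
          Complex.exp (2 * (π : ℂ) * Complex.I *
            (((if (i : ℕ) < m then ((i : ℕ) : ℝ) - m else ((i : ℕ) : ℝ) - m + 1) : ℝ) : ℂ)
            * (x : ℂ)) := by
      intro i
      rw [← Complex.exp_nat_mul, ← Complex.exp_add]
      congr 1
      simp only [hee]
      by_cases h : (i:ℕ) < m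
      · simp only [h, if_true]
        push_cast
        ring
      · simp only [h, if_false]
        push_cast
        ring
    have hfactor : ∑ i : Fin (2*m), c i * (Complex.exp (2*(π:ℂ)*Complex.I*(x:ℂ))) ^ (ee i)
        = Complex.exp (2*(π:ℂ)*Complex.I*(m:ℂ)*(x:ℂ)) *
          ∑ i : Fin (2 * m), c i * Complex.exp (2 * (π : ℂ) * Complex.I *
            (((if (i : ℕ) < m then ((i : ℕ) : ℝ) - m else ((i : ℕ) : ℝ) - m + 1) : ℝ) : ℂ)
            * (x : ℂ)) := by
      rw [Finset.mul_sum]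
      apply Finset.sum_congr rfl
      intro i _
      rw [hterm i]; ring
    have habs1 : ‖Complex.exp (2*(π:ℂ)*Complex.I*(m:ℂ)*(x:ℂ))‖ = 1 := by
      rw [show 2*(π:ℂ)*Complex.I*(m:ℂ)*(x:ℂ) = ((2*π*m*x : ℝ) : ℂ) * Complex.I by
        push_cast; ring]
      exact Complex.norm_exp_ofReal_mul_I _
    rw [hu, heval, hfactor, norm_mul, habs1, one_mul]
  -- near roots
  set Sn := Q.roots.filter (fun z => ‖z‖ ≤ 2) with hSnn
  have hrn : Multiset.card Sn ≤ 2*m := by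
    have h1 : Multiset.card Sn ≤ Multiset.card Q.roots :=
      Multiset.card_le_card (Multiset.filter_le _ _)
    have h2 : Multiset.card Q.roots ≤ Q.natDegree := Polynomial.card_roots' Q
    omega
  set ε : ℝ := δ * ((3:ℝ)^(2*m) * K) with hε
  have hεpos : 0 < ε := by positivity
  set t : ℝ := ε ^ dm with htdef
  have ht0 : 0 ≤ t := Real.rpow_nonneg hεpos.le _
  have htC : t = C0 * δ ^ dm := by
    rw [htdef, hε, hC0, Real.mul_rpow hδ.le (by positivity)]
    ring
  rcases le_or_gt ε 1 with hεcase | hεcase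
  · -- main case: cover by arcs
    have ht1 : t ≤ 1 := Real.rpow_le_one hεpos.le hεcase hdm0.le
    have htpow : t ^ (2*m) = ε := by
      rw [htdef, ← Real.rpow_natCast (ε ^ dm) (2*m), ← Real.rpow_mul hεpos.le]
      rw [hdm, inv_mul_cancel₀ (by exact_mod_cast h2m.ne')]
      exact Real.rpow_one ε
    have hsubset : {x ∈ Set.Ico (0 : ℝ) 1 |
          ‖∑ i : Fin (2 * m),
            c i * Complex.exp (2 * (π : ℂ) * Complex.I *
              (((if (i : ℕ) < m then ((i : ℕ) : ℝ) - m else ((i : ℕ) : ℝ) - m + 1) : ℝ) : ℂ)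
              * (x : ℂ))‖ < δ}
        ⊆ ⋃ z ∈ Sn.toFinset, {x ∈ Set.Ico (0:ℝ) 1 |
            ‖Complex.exp (((2*π*x : ℝ)) * Complex.I) - z‖ ≤ t} := by
      rintro x ⟨hxI, hxlt⟩
      rw [hPQ x] at hxlt
      set u := Complex.exp (((2*π*x : ℝ)) * Complex.I) with hudef
      have hu1 : ‖u‖ = 1 := Complex.norm_exp_ofReal_mul_I _
      have hptw := aux_pointwise m Q hdeg K⁻¹ hκle u hu1
      set Pn := (Sn.map fun z => ‖u - z‖).prod with hPn
      have hPnlt : Pn < ε := by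
        set A : ℝ := K⁻¹ / 3^(2*m) with hAdef
        have hA : (0:ℝ) < A := by positivity
        have h1 : A * Pn < δ := lt_of_le_of_lt hptw hxlt
        have hAK : A * ((3:ℝ)^(2*m) * K) = 1 := by
          rw [hAdef]; field_simp
        have hPn0 : 0 ≤ Pn := aux_map_nonneg _ _ (fun z => norm_nonneg _)
        calc Pn = (A * Pn) * ((3:ℝ)^(2*m) * K) := by
              rw [show (A * Pn) * ((3:ℝ)^(2*m) * K) = (A * ((3:ℝ)^(2*m) * K)) * Pn by ring,
                hAK, one_mul]
          _ < δ * ((3:ℝ)^(2*m) * K) := by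
              apply mul_lt_mul_of_pos_right h1 (by positivity)
          _ = ε := hε.symm
      by_contra hcon
      simp only [Set.mem_iUnion, not_exists] at hcon
      have hall : ∀ z ∈ Sn, t ≤ ‖u - z‖ := by
        intro z hz
        have h9 := hcon z (Multiset.mem_toFinset.mpr hz)
        have : ¬ (x ∈ Set.Ico (0:ℝ) 1 ∧ ‖u - z‖ ≤ t) := h9
        push_neg at this
        exact (this hxI).le
      have hlow := aux_pow_card_le_prod Sn _ t ht0 hall
      have h5 : ε ≤ t ^ (Multiset.card Sn) := by
        calc ε = t ^ (2*m) := htpow.symm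
          _ ≤ t ^ (Multiset.card Sn) := pow_le_pow_of_le_one ht0 ht1 hrn
      linarith
    calc volume {x ∈ Set.Ico (0 : ℝ) 1 |
          ‖∑ i : Fin (2 * m),
            c i * Complex.exp (2 * (π : ℂ) * Complex.I *
              (((if (i : ℕ) < m then ((i : ℕ) : ℝ) - m else ((i : ℕ) : ℝ) - m + 1) : ℝ) : ℂ)
              * (x : ℂ))‖ < δ}
        ≤ volume (⋃ z ∈ Sn.toFinset, {x ∈ Set.Ico (0:ℝ) 1 |
            ‖Complex.exp (((2*π*x : ℝ)) * Complex.I) - z‖ ≤ t}) :=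
          measure_mono hsubset
      _ ≤ ∑ z ∈ Sn.toFinset, volume {x ∈ Set.Ico (0:ℝ) 1 |
            ‖Complex.exp (((2*π*x : ℝ)) * Complex.I) - z‖ ≤ t} :=
          measure_biUnion_finset_le _ _
      _ ≤ ∑ _z ∈ Sn.toFinset, ENNReal.ofReal (2*t) :=
          Finset.sum_le_sum (fun z _ => aux_arc_measure z t ht0)
      _ = (Sn.toFinset.card : ENNReal) * ENNReal.ofReal (2*t) := by
          rw [Finset.sum_const, nsmul_eq_mul]
      _ ≤ ((2*m : ℕ) : ENNReal) * ENNReal.ofReal (2*t) := by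
          have hcardle : Sn.toFinset.card ≤ 2*m :=
            le_trans (Multiset.toFinset_card_le Sn) hrn
          exact mul_le_mul_left (by exact_mod_cast hcardle) _
      _ = ENNReal.ofReal (((2*m : ℕ) : ℝ) * (2*t)) := by
          rw [ENNReal.ofReal_mul (by positivity : (0:ℝ) ≤ ((2*m:ℕ):ℝ)), ENNReal.ofReal_natCast]
      _ < ENNReal.ofReal ((4*(m:ℝ) + 2) * C0 * δ ^ dm) := by
          rw [ENNReal.ofReal_lt_ofReal_iff (by positivity)]
          rw [htC]
          have : ((2*m : ℕ) : ℝ) = 2*(m:ℝ) := by push_cast; ring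
          rw [this]
          have hpos : 0 < C0 * δ ^ dm := by positivity
          nlinarith [hpos]
  · -- trivial case: measure at most 1
    have hle : volume {x ∈ Set.Ico (0 : ℝ) 1 |
          ‖∑ i : Fin (2 * m),
            c i * Complex.exp (2 * (π : ℂ) * Complex.I *
              (((if (i : ℕ) < m then ((i : ℕ) : ℝ) - m else ((i : ℕ) : ℝ) - m + 1) : ℝ) : ℂ)
              * (x : ℂ))‖ < δ} ≤ 1 := by
      refine le_trans (measure_mono (Set.sep_subset _ _)) ?_
      rw [Real.volume_Ico]
      simp
    refine lt_of_le_of_lt hle ?_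
    have h1 : (1:ℝ) < ε ^ dm := by
      rw [Real.one_lt_rpow_iff_of_pos hεpos]
      left
      exact ⟨hεcase, hdm0⟩
    have h2 : (1:ℝ) < (4*(m:ℝ) + 2) * C0 * δ ^ dm := by
      have hεdm : ε ^ dm = C0 * δ ^ dm := htC
      rw [hεdm] at h1
      have hm1 : (1:ℝ) ≤ (m:ℝ) := by exact_mod_cast hm
      nlinarith [h1]
    calc (1 : ENNReal) = ENNReal.ofReal 1 := by simp
      _ < ENNReal.ofReal ((4*(m:ℝ) + 2) * C0 * δ ^ dm) := by
          rw [ENNReal.ofReal_lt_ofReal_iff (by positivity)]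
          exact h2
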